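/- Let n, k be positive integers with k < n/2. If F is an intersecting family of k-element subsets of {1,...,n} with |F| = C(n-1, k-1), then there exists an element i ∈ {1,...,n} such that F = {S : S is a k-subset of [n] and i ∈ S}. -/

import Mathlib

namespace EKRUnique

variable {n : ℕ}

lemma vsub_key [NeZero n] (a b : ZMod n) :
    (a - b).val + b.val = a.val ∨ (a - b).val + b.val = a.val + n := by
  have h := ZMod.val_add (a - b) b
  rw [sub_add_cancel] at h
  have h1 : (a - b).val < n := ZMod.val_lt _
  have h2 : b.val < n := ZMod.val_lt _
  have h3 : a.val < n := ZMod.val_lt _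
  rcases Nat.lt_or_ge ((a - b).val + b.val) n with hlt | hge
  · left; rw [Nat.mod_eq_of_lt hlt] at h; omega
  · right
    rw [Nat.mod_eq_sub_mod hge, Nat.mod_eq_of_lt (by omega)] at h
    omega

lemma veq [NeZero n] {a b : ZMod n} : a = b ↔ a.val = b.val :=
  ⟨fun h => by rw [h], fun h => ZMod.val_injective n h⟩

/-- the window of length `k` starting at `t` -/
def win (k : ℕ) (t : ZMod n) : Finset (ZMod n) :=
  (Finset.range k).image (fun j : ℕ => t + (j : ZMod n))

lemma mem_win [NeZero n] {k : ℕ} (hkn : k ≤ n) {t s : ZMod n} :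
    s ∈ win k t ↔ (s - t).val < k := by
  simp only [win, Finset.mem_image, Finset.mem_range]
  constructor
  · rintro ⟨j, hj, rfl⟩
    have : t + (j : ZMod n) - t = (j : ZMod n) := by ring
    rw [this, ZMod.val_cast_of_lt (lt_of_lt_of_le hj hkn)]
    exact hj
  · intro h
    refine ⟨(s - t).val, h, ?_⟩
    rw [ZMod.natCast_rightInverse (s - t)]
    ring

lemma card_win [NeZero n] {k : ℕ} (hkn : k ≤ n) (t : ZMod n) :
    (win k t).card = k := by
  rw [win, Finset.card_image_of_injOn, Finset.card_range]
  intro a ha b hb hab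
  simp only [Finset.coe_range, Set.mem_Iio] at ha hb
  have : (a : ZMod n) = b := by
    have := add_left_cancel hab
    exact this
  rw [veq, ZMod.val_cast_of_lt (lt_of_lt_of_le ha hkn),
    ZMod.val_cast_of_lt (lt_of_lt_of_le hb hkn)] at this
  exact this

lemma win_disjoint [NeZero n] {k : ℕ} {t t' : ZMod n}
    (h1 : k ≤ (t' - t).val) (h2 : k ≤ (t - t').val) :
    Disjoint (win k t) (win k t') := by
  have hkn : k ≤ n := le_of_lt (lt_of_le_of_lt h1 (ZMod.val_lt _))
  rw [Finset.disjoint_left]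
  intro s hs hs'
  rw [mem_win hkn] at hs hs'
  have e1 : (s - t) - (s - t') = t' - t := by ring
  have e2 : (s - t') - (s - t) = t - t' := by ring
  have k1 := vsub_key (s - t) (s - t'); rw [e1] at k1
  have k2 := vsub_key (s - t') (s - t); rw [e2] at k2
  have l1 : (t' - t).val < n := ZMod.val_lt _
  have l2 : (t - t').val < n := ZMod.val_lt _
  omega

lemma val_add_neg [NeZero n] {x : ZMod n} (hx : x ≠ 0) : (-x).val + x.val = n := by
  have := vsub_key (0 : ZMod n) x
  rw [zero_sub, ZMod.val_zero] at this
  rcases this with h | h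
  · exfalso
    apply hx
    rw [veq, ZMod.val_zero]
    have := ZMod.val_lt (n := n) x
    omega
  · omega

/-- the arc of a cyclic arrangement -/
def arc (k : ℕ) (σ : ZMod n ≃ Fin n) (t : ZMod n) : Finset (Fin n) :=
  (win k t).image σ

lemma card_arc [NeZero n] {k : ℕ} (hkn : k ≤ n) (σ : ZMod n ≃ Fin n) (t : ZMod n) :
    (arc k σ t).card = k := by
  rw [arc, Finset.card_image_of_injective _ σ.injective, card_win hkn]

lemma arc_overlap [NeZero n] {k : ℕ} {σ : ZMod n ≃ Fin n} {t t' : ZMod n}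
    (h : (arc k σ t ∩ arc k σ t').Nonempty) :
    (t' - t).val < k ∨ (t - t').val < k := by
  by_contra hc
  push_neg at hc
  have hd := win_disjoint hc.1 hc.2
  rw [arc, arc, ← Finset.image_inter _ _ σ.injective] at h
  obtain ⟨x, hx⟩ := h
  obtain ⟨y, hy, -⟩ := Finset.mem_image.1 hx
  exact (Finset.disjoint_left.1 hd (Finset.mem_inter.1 hy).1) (Finset.mem_inter.1 hy).2


lemma exists_perm_image {α : Type*} [Fintype α] [DecidableEq α] {A A' : Finset α}
    (h : A.card = A'.card) : ∃ π : Equiv.Perm α, A.image π = A' := by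
  classical
  have hc : (Aᶜ : Finset α).card = (A'ᶜ : Finset α).card := by
    rw [Finset.card_compl, Finset.card_compl, h]
  let e : {x // x ∈ A} ≃ {x // x ∈ A'} := A.equivOfCardEq h
  let e0 : {x // x ∈ (Aᶜ : Finset α)} ≃ {x // x ∈ (A'ᶜ : Finset α)} := Finset.equivOfCardEq hc
  let e1 : {x // ¬ x ∈ A} ≃ {x // ¬ x ∈ A'} :=
    ((Equiv.subtypeEquivRight (fun x => by simp)).trans e0).trans
      (Equiv.subtypeEquivRight (fun x => by simp))
  refine ⟨Equiv.subtypeCongr e e1, ?_⟩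
  apply Finset.eq_of_subset_of_card_le
  · intro y hy
    obtain ⟨x, hx, rfl⟩ := Finset.mem_image.1 hy
    have : Equiv.subtypeCongr e e1 x = (e ⟨x, hx⟩ : α) := by
      simp [Equiv.subtypeCongr, hx]
    rw [this]
    exact (e ⟨x, hx⟩).2
  · rw [Finset.card_image_of_injective _ (Equiv.injective _), h]

section Counting

variable {n : ℕ} [NeZero n]

/-- permutations realizing `A` as the arc at `t` -/
def fib (k : ℕ) (t : ZMod n) (A : Finset (Fin n)) : Finset (ZMod n ≃ Fin n) :=
  Finset.univ.filter (fun σ => arc k σ t = A)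

lemma image_win_addLeft (k : ℕ) (a t : ZMod n) :
    (win k t).image (fun x => a + x) = win k (a + t) := by
  rw [win, win, Finset.image_image]
  apply Finset.image_congr
  intro j _
  simp only [Function.comp_apply]
  ring

lemma arc_comp (k : ℕ) (σ : ZMod n ≃ Fin n) (π : Equiv.Perm (Fin n)) (a t : ZMod n) :
    arc k (((Equiv.addLeft a).trans σ).trans π) t = (arc k σ (a + t)).image π := by
  rw [arc, arc, ← image_win_addLeft k a t, Finset.image_image, Finset.image_image]
  apply Finset.image_congr
  intro j _
  simp

lemma fib_card_eq {k : ℕ} {t t' : ZMod n} {A A' : Finset (Fin n)}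
    (hA : A.card = k) (hA' : A'.card = k) :
    (fib k t A).card = (fib k t' A').card := by
  classical
  obtain ⟨π, hπ⟩ := exists_perm_image (A := A) (A' := A') (hA.trans hA'.symm)
  set a := t - t' with ha
  have hat : a + t' = t := by rw [ha]; ring
  apply Finset.card_bij' (fun σ _ => ((Equiv.addLeft a).trans σ).trans π)
    (fun σ' _ => ((Equiv.addLeft (-a)).trans σ').trans π.symm)
  · intro σ hσ
    rw [fib, Finset.mem_filter] at hσ ⊢
    refine ⟨Finset.mem_univ _, ?_⟩
    rw [arc_comp, hat, hσ.2, hπ]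
  · intro σ' hσ'
    rw [fib, Finset.mem_filter] at hσ' ⊢
    refine ⟨Finset.mem_univ _, ?_⟩
    rw [arc_comp]
    have hat' : -a + t = t' := by rw [ha]; ring
    rw [hat', hσ'.2, ← hπ, Finset.image_image]
    simp
  · intro σ _
    ext x
    simp
  · intro σ _
    ext x
    simp

lemma card_filter_arc_mem (k : ℕ) (t : ZMod n) (F : Finset (Finset (Fin n))) :
    ((Finset.univ : Finset (ZMod n ≃ Fin n)).filter (fun σ => arc k σ t ∈ F)).card
      = ∑ A ∈ F, (fib k t A).card := by
  classical
  rw [Finset.card_eq_sum_card_fiberwise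
    (s := (Finset.univ : Finset (ZMod n ≃ Fin n)).filter (fun σ => arc k σ t ∈ F))
    (f := fun σ : ZMod n ≃ Fin n => arc k σ t) (t := F)
    (fun σ hσ => (Finset.mem_filter.1 hσ).2)]
  apply Finset.sum_congr rfl
  intro A _
  congr 1
  rw [fib, Finset.filter_filter]
  apply Finset.filter_congr
  intro σ _
  constructor
  · rintro ⟨-, h⟩; exact h
  · intro h; exact ⟨by rw [h]; assumption, h⟩

end Counting

section Structure

variable {n k : ℕ} [NeZero n]

/-- positions whose arc lies in the family -/
def Tset (k : ℕ) (F : Finset (Finset (Fin n))) (σ : ZMod n ≃ Fin n) : Finset (ZMod n) :=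
  Finset.univ.filter (fun t => arc k σ t ∈ F)

lemma overlap_T {F : Finset (Finset (Fin n))}
    (hint : ∀ S ∈ F, ∀ T ∈ F, (S ∩ T).Nonempty) {σ : ZMod n ≃ Fin n} {t t' : ZMod n}
    (ht : t ∈ Tset k F σ) (ht' : t' ∈ Tset k F σ) :
    (t' - t).val < k ∨ (t - t').val < k := by
  rw [Tset, Finset.mem_filter] at ht ht'
  exact arc_overlap (hint _ ht.2 _ ht'.2)

lemma T_dichotomy (hk : 1 ≤ k) (hn : 2*k < n) {F : Finset (Finset (Fin n))}
    (hint : ∀ S ∈ F, ∀ T ∈ F, (S ∩ T).Nonempty) {σ : ZMod n ≃ Fin n} {t t0 : ZMod n}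
    (ht0 : t0 ∈ Tset k F σ) (ht : t ∈ Tset k F σ) :
    (t - t0).val < k ∨ (n - k < (t - t0).val ∧ (t - t0).val < n) := by
  rcases overlap_T hint ht0 ht with h | h
  · left; exact h
  · by_cases h0 : t - t0 = 0
    · left; rw [h0, ZMod.val_zero]; omega
    right
    have h2 := val_add_neg (x := t - t0) h0
    have hnt : -(t - t0) = t0 - t := by ring
    rw [hnt] at h2
    have h3 : (t0 - t).val ≠ 0 := by
      intro hz
      apply h0
      have h4 : t0 - t = 0 := by rw [veq, ZMod.val_zero]; exact hz
      have h5 : t0 = t := sub_eq_zero.mp h4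
      rw [h5]
      exact sub_self t
    have h6 := ZMod.val_lt (n := n) (t - t0)
    exact ⟨by omega, h6⟩

/-- the injection used for Katona's bound -/
lemma f_injOn (hk : 1 ≤ k) (hn : 2*k < n) {F : Finset (Finset (Fin n))}
    (hint : ∀ S ∈ F, ∀ T ∈ F, (S ∩ T).Nonempty) {σ : ZMod n ≃ Fin n} {t0 : ZMod n}
    (ht0 : t0 ∈ Tset k F σ) :
    Set.InjOn (fun t => if (t - t0).val < k then (t - t0).val else (t - t0).val - (n - k))
      (Tset k F σ) := by
  intro t ht t' ht' hf
  simp only at hf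
  have d1 := T_dichotomy hk hn hint ht0 ht
  have d2 := T_dichotomy hk hn hint ht0 ht'
  -- helper for the mixed case
  have mixed : ∀ u u' : ZMod n, u ∈ Tset k F σ → u' ∈ Tset k F σ →
      (u - t0).val < k → n - k < (u' - t0).val → (u' - t0).val < n →
      (u' - t0).val - (n - k) = (u - t0).val → False := by
    intro u u' hu hu' hv1 hv2 hv3 hfe
    have e1 : (u' - t0) - (u - t0) = u' - u := by ring
    have k1 := vsub_key (u' - t0) (u - t0); rw [e1] at k1
    have lv1 := ZMod.val_lt (n := n) (u' - u)
    have lv2 := ZMod.val_lt (n := n) (u - u')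
    have hval : (u' - u).val = n - k := by omega
    have hne : u' - u ≠ 0 := by
      intro h0; rw [h0, ZMod.val_zero] at hval; omega
    have h2 := val_add_neg hne
    have hnn : -(u' - u) = u - u' := by ring
    rw [hnn] at h2
    rcases overlap_T hint hu hu' with h | h <;> omega
  rcases d1 with h1 | h1 <;> rcases d2 with h2 | h2
  · rw [if_pos h1, if_pos h2] at hf
    have : t - t0 = t' - t0 := by rw [veq]; omega
    exact sub_left_inj.1 this
  · rw [if_pos h1, if_neg (by omega)] at hf
    exact (mixed t t' ht ht' h1 h2.1 h2.2 hf.symm).elim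
  · rw [if_neg (by omega), if_pos h2] at hf
    exact (mixed t' t ht' ht h2 h1.1 h1.2 hf).elim
  · rw [if_neg (by omega), if_neg (by omega)] at hf
    have : t - t0 = t' - t0 := by rw [veq]; omega
    exact sub_left_inj.1 this

lemma f_maps (hk : 1 ≤ k) (hn : 2*k < n) {F : Finset (Finset (Fin n))}
    (hint : ∀ S ∈ F, ∀ T ∈ F, (S ∩ T).Nonempty) {σ : ZMod n ≃ Fin n} {t0 t : ZMod n}
    (ht0 : t0 ∈ Tset k F σ) (ht : t ∈ Tset k F σ) :
    (if (t - t0).val < k then (t - t0).val else (t - t0).val - (n - k)) < k := by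
  rcases T_dichotomy hk hn hint ht0 ht with h | h
  · rw [if_pos h]; exact h
  · rw [if_neg (by omega)]; omega

lemma card_T_le (hk : 1 ≤ k) (hn : 2*k < n) {F : Finset (Finset (Fin n))}
    (hint : ∀ S ∈ F, ∀ T ∈ F, (S ∩ T).Nonempty) (σ : ZMod n ≃ Fin n) :
    (Tset k F σ).card ≤ k := by
  rcases (Tset k F σ).eq_empty_or_nonempty with h | ⟨t0, ht0⟩
  · rw [h]; simpa using hk
  calc (Tset k F σ).card ≤ (Finset.range k).card := by
        apply Finset.card_le_card_of_injOn
          (fun t => if (t - t0).val < k then (t - t0).val else (t - t0).val - (n - k))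
        · intro t ht
          rw [Finset.mem_coe, Finset.mem_range]
          exact f_maps hk hn hint ht0 ht
        · exact f_injOn hk hn hint ht0
    _ = k := Finset.card_range k

end Structure

section Equality

variable {n k : ℕ} [NeZero n]

lemma T_card_eq (hk : 1 ≤ k) (hn : 2*k < n)
    (F : Finset (Finset (Fin n)))
    (hcard : ∀ S ∈ F, S.card = k)
    (hint : ∀ S ∈ F, ∀ T ∈ F, (S ∩ T).Nonempty)
    (hmax : F.card = (n-1).choose (k-1)) :
    ∀ σ : ZMod n ≃ Fin n, (Tset k F σ).card = k := by
  classical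
  have hkn : k ≤ n := by omega
  have hFne : F.Nonempty := by
    rw [← Finset.card_pos, hmax]
    exact Nat.choose_pos (by omega)
  obtain ⟨A0, hA0⟩ := hFne
  set v := (fib k (0 : ZMod n) A0).card with hv
  have hfib : ∀ (t : ZMod n) (A : Finset (Fin n)), A.card = k → (fib k t A).card = v :=
    fun t A hA => fib_card_eq hA (hcard A0 hA0)
  set M := Fintype.card (ZMod n ≃ Fin n) with hM
  have hMv : M = n.choose k * v := by
    rw [hM, ← Finset.card_univ]
    rw [Finset.card_eq_sum_card_fiberwise
      (f := fun σ : ZMod n ≃ Fin n => arc k σ 0)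
      (t := Finset.powersetCard k (Finset.univ : Finset (Fin n)))
      (fun σ _ => Finset.mem_powersetCard_univ.2 (card_arc hkn σ 0))]
    rw [Finset.sum_congr rfl
      (fun A hA => (show (Finset.filter (fun σ : ZMod n ≃ Fin n => arc k σ 0 = A)
          Finset.univ).card = (fib k 0 A).card from rfl).trans
        (hfib 0 A (Finset.mem_powersetCard_univ.1 hA)))]
    rw [Finset.sum_const, Finset.card_powersetCard, Finset.card_univ, Fintype.card_fin,
      smul_eq_mul]
  have main1 : ∑ σ : ZMod n ≃ Fin n, (Tset k F σ).card = n * (F.card * v) := by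
    have e1 : ∀ σ : ZMod n ≃ Fin n,
        (Tset k F σ).card = ∑ t : ZMod n, (if arc k σ t ∈ F then 1 else 0) := by
      intro σ
      rw [Tset, Finset.card_filter]
    rw [Finset.sum_congr rfl (fun σ _ => e1 σ), Finset.sum_comm]
    have e2 : ∀ t : ZMod n,
        (∑ σ : ZMod n ≃ Fin n, if arc k σ t ∈ F then 1 else 0) = F.card * v := by
      intro t
      rw [← Finset.card_filter, card_filter_arc_mem]
      rw [Finset.sum_congr rfl (fun A hA => hfib t A (hcard A hA)), Finset.sum_const,
        smul_eq_mul]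
    rw [Finset.sum_congr rfl (fun t _ => e2 t), Finset.sum_const, Finset.card_univ,
      ZMod.card, smul_eq_mul]
  have keyid : n * ((n-1).choose (k-1)) = n.choose k * k := by
    have h := Nat.add_one_mul_choose_eq (n-1) (k-1)
    have h1 : n - 1 + 1 = n := by omega
    have h2 : k - 1 + 1 = k := by omega
    simp only [Nat.succ_eq_add_one, h1, h2] at h
    exact h
  have main2 : ∑ σ : ZMod n ≃ Fin n, (Tset k F σ).card = ∑ _σ : ZMod n ≃ Fin n, k := by
    rw [main1, Finset.sum_const, Finset.card_univ, ← hM, smul_eq_mul, hmax, hMv]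
    calc n * ((n-1).choose (k-1) * v) = n * ((n-1).choose (k-1)) * v := by ring
      _ = n.choose k * k * v := by rw [keyid]
      _ = n.choose k * v * k := by ring
  intro σ
  exact (Finset.sum_eq_sum_iff_of_le
    (fun τ _ => card_T_le hk hn hint τ)).1 main2 σ (Finset.mem_univ σ)

end Equality

section Block

variable {n k : ℕ} [NeZero n]

lemma T_block (hk : 1 ≤ k) (hn : 2*k < n)
    {F : Finset (Finset (Fin n))}
    (hint : ∀ S ∈ F, ∀ T ∈ F, (S ∩ T).Nonempty)
    {σ : ZMod n ≃ Fin n} (hTk : (Tset k F σ).card = k) :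
    ∃ b : ZMod n, Tset k F σ = win k b := by
  classical
  have hkn : k ≤ n := by omega
  obtain ⟨t0, ht0⟩ : (Tset k F σ).Nonempty := by
    rw [← Finset.card_pos, hTk]; omega
  have himg : (Tset k F σ).image
      (fun t => if (t - t0).val < k then (t - t0).val else (t - t0).val - (n - k))
      = Finset.range k := by
    apply Finset.eq_of_subset_of_card_le
    · intro j hj
      obtain ⟨t, ht, rfl⟩ := Finset.mem_image.1 hj
      rw [Finset.mem_range]
      exact f_maps hk hn hint ht0 ht
    · rw [Finset.card_range, Finset.card_image_of_injOn (f_injOn hk hn hint ht0), hTk]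
  have wit : ∀ j, j < k → (t0 + (j : ZMod n)) ∈ Tset k F σ ∨
      (t0 + (j : ZMod n) - (k : ZMod n)) ∈ Tset k F σ := by
    intro j hj
    have hjm : j ∈ (Tset k F σ).image
        (fun t => if (t - t0).val < k then (t - t0).val else (t - t0).val - (n - k)) := by
      rw [himg]; exact Finset.mem_range.2 hj
    obtain ⟨t, ht, hft⟩ := Finset.mem_image.1 hjm
    rcases T_dichotomy hk hn hint ht0 ht with h | h
    · left
      simp only [if_pos h] at hft
      have h1 : t - t0 = (j : ZMod n) := by
        rw [veq, ZMod.val_cast_of_lt (lt_of_lt_of_le hj hkn)]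
        exact hft
      have h2 : t = t0 + (j : ZMod n) := by rw [← h1]; ring
      rwa [← h2]
    · right
      simp only [if_neg (by omega : ¬ (t - t0).val < k)] at hft
      have hval : (t - t0).val = n - k + j := by omega
      have hc : ((n - k + j : ℕ) : ZMod n) = (j : ZMod n) - (k : ZMod n) := by
        rw [Nat.cast_add, Nat.cast_sub hkn, ZMod.natCast_self]
        ring
      have h1 : t - t0 = (j : ZMod n) - (k : ZMod n) := by
        rw [← hc, veq, ZMod.val_cast_of_lt (by omega : n - k + j < n)]
        exact hval
      have h2 : t = t0 + (j : ZMod n) - (k : ZMod n) := by rw [← sub_add_cancel t t0, h1]; ring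
      rwa [← h2]
  have mono : ∀ j, 1 ≤ j → j + 1 < k →
      ¬ (t0 + (j : ZMod n)) ∈ Tset k F σ → ¬ (t0 + ((j+1 : ℕ) : ZMod n)) ∈ Tset k F σ := by
    intro j hj1 hjk hnP hP
    have hQ : (t0 + (j : ZMod n) - (k : ZMod n)) ∈ Tset k F σ :=
      (wit j (by omega)).resolve_left hnP
    set t := t0 + (j : ZMod n) - (k : ZMod n) with hdt
    set t' := t0 + ((j+1 : ℕ) : ZMod n) with hdt'
    have e1 : t' - t = ((k + 1 : ℕ) : ZMod n) := by
      rw [hdt, hdt']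
      push_cast
      ring
    have hv1 : (t' - t).val = k + 1 := by
      rw [e1, ZMod.val_cast_of_lt (by omega)]
    have hv2 : (t - t').val = n - (k + 1) := by
      have hne : t' - t ≠ 0 := by
        rw [e1]
        intro h0
        rw [veq, ZMod.val_cast_of_lt (by omega : k + 1 < n), ZMod.val_zero] at h0
        omega
      have := val_add_neg hne
      have hneg : -(t' - t) = t - t' := by ring
      rw [hneg] at this
      omega
    rcases overlap_T hint hQ hP with h | h <;> omega
  have hP0 : (t0 + ((0:ℕ) : ZMod n)) ∈ Tset k F σ := by
    simpa using ht0
  set S := (Finset.range k).filter (fun j : ℕ => t0 + ((j : ℕ) : ZMod n) ∈ Tset k F σ) with hS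
  have hS0 : (0:ℕ) ∈ S := by
    rw [hS, Finset.mem_filter, Finset.mem_range]
    exact ⟨by omega, hP0⟩
  set m := S.max' ⟨0, hS0⟩ with hm
  have hmS : m ∈ S := S.max'_mem _
  have hmk : m < k := by
    have := (Finset.mem_filter.1 hmS).1
    rwa [Finset.mem_range] at this
  have hPm : (t0 + (m : ZMod n)) ∈ Tset k F σ := (Finset.mem_filter.1 hmS).2
  have hP_le : ∀ j, j ≤ m → (t0 + (j : ZMod n)) ∈ Tset k F σ := by
    intro j hjm
    by_contra hnj
    have hj1 : 1 ≤ j := by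
      rcases Nat.eq_zero_or_pos j with rfl | h
      · exact absurd hP0 (by simpa using hnj)
      · exact h
    have climb : ∀ i, j ≤ i → i ≤ m → ¬ (t0 + (i : ZMod n)) ∈ Tset k F σ := by
      intro i hji him
      induction i, hji using Nat.le_induction with
      | base => exact hnj
      | succ i hji ih =>
        have hik : i + 1 < k := by omega
        exact mono i (by omega) hik (ih (by omega))
    exact climb m hjm le_rfl hPm
  have hQ_gt : ∀ j, m < j → j < k →
      (t0 + (j : ZMod n) - (k : ZMod n)) ∈ Tset k F σ := by
    intro j hmj hjk
    refine (wit j hjk).resolve_left (fun hP => ?_)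
    have : j ∈ S := by
      rw [hS, Finset.mem_filter, Finset.mem_range]
      exact ⟨hjk, hP⟩
    have := S.le_max' j this
    omega
  refine ⟨t0 + ((m+1 : ℕ) : ZMod n) - ((k:ℕ) : ZMod n), ?_⟩
  have hsub : win k (t0 + ((m+1 : ℕ) : ZMod n) - ((k:ℕ) : ZMod n)) ⊆ Tset k F σ := by
    intro s hs
    rw [win, Finset.mem_image] at hs
    obtain ⟨i, hi, rfl⟩ := hs
    rw [Finset.mem_range] at hi
    by_cases hc : m + 1 + i < k
    · have e : t0 + ((m+1 : ℕ) : ZMod n) - ((k:ℕ) : ZMod n) + (i : ZMod n)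
          = t0 + ((m+1+i : ℕ) : ZMod n) - ((k:ℕ) : ZMod n) := by
        push_cast
        ring
      rw [e]
      exact hQ_gt (m+1+i) (by omega) hc
    · have e : t0 + ((m+1 : ℕ) : ZMod n) - ((k:ℕ) : ZMod n) + (i : ZMod n)
          = t0 + ((m+1+i-k : ℕ) : ZMod n) := by
        rw [Nat.cast_sub (by omega : k ≤ m+1+i)]
        push_cast
        ring
      rw [e]
      exact hP_le (m+1+i-k) (by omega)
  exact (Finset.eq_of_subset_of_card_le hsub (by rw [hTk, card_win hkn])).symm

end Block

section Swap

variable {n k : ℕ} [NeZero n]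

lemma three_pigeon {α : Type*} {x y z q1 q2 : α} (hx : x = q1 ∨ x = q2) (hy : y = q1 ∨ y = q2)
    (hz : z = q1 ∨ z = q2) (hxy : x ≠ y) (hxz : x ≠ z) (hyz : y ≠ z) : False := by
  rcases hx with h1 | h1 <;> rcases hy with h2 | h2 <;> rcases hz with h3 | h3 <;>
    first
      | exact hxy (h1.trans h2.symm)
      | exact hxz (h1.trans h3.symm)
      | exact hyz (h2.trans h3.symm)

lemma val_add_nat (d : ZMod n) (a : ℕ) (ha : a < n) :
    (d + (a : ZMod n)).val = d.val + a ∨ (d + (a : ZMod n)).val + n = d.val + a := by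
  have h := ZMod.val_add d ((a : ℕ) : ZMod n)
  rw [ZMod.val_cast_of_lt ha] at h
  have h1 := ZMod.val_lt (n := n) d
  rcases Nat.lt_or_ge (d.val + a) n with hlt | hge
  · left; rw [Nat.mod_eq_of_lt hlt] at h; omega
  · right; rw [Nat.mod_eq_sub_mod hge, Nat.mod_eq_of_lt (by omega)] at h; omega

lemma image_swap_win (hkn : k ≤ n) {p t : ZMod n}
    (hb : p ∈ win k t ↔ p + 1 ∈ win k t) :
    (win k t).image (Equiv.swap p (p+1)) = win k t := by
  by_cases hp : p ∈ win k t
  · have hp1 : p + 1 ∈ win k t := hb.1 hp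
    apply Finset.eq_of_subset_of_card_le
    · intro x hx
      obtain ⟨y, hy, rfl⟩ := Finset.mem_image.1 hx
      rcases eq_or_ne y p with rfl | h1
      · rwa [Equiv.swap_apply_left]
      rcases eq_or_ne y (p+1) with rfl | h2
      · rwa [Equiv.swap_apply_right]
      · rwa [Equiv.swap_apply_of_ne_of_ne h1 h2]
    · rw [Finset.card_image_of_injective _ (Equiv.injective _)]
  · have hp1 : p + 1 ∉ win k t := fun h => hp (hb.2 h)
    have : ∀ x ∈ win k t, Equiv.swap p (p+1) x = x := by
      intro x hx
      exact Equiv.swap_apply_of_ne_of_ne (fun h => hp (h ▸ hx)) (fun h => hp1 (h ▸ hx))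
    calc (win k t).image (Equiv.swap p (p+1)) = (win k t).image id := Finset.image_congr
          (fun x hx => this x hx)
      _ = win k t := Finset.image_id

lemma win_swap_agree (hk : 1 ≤ k) (hn : 2*k < n) {p t : ZMod n}
    (h1 : t ≠ p + 1) (h2 : t ≠ p + 1 - (k : ZMod n)) :
    (p ∈ win k t ↔ p + 1 ∈ win k t) := by
  have hkn : k ≤ n := by omega
  rw [mem_win hkn, mem_win hkn]
  have e1 : p + 1 - t = (p - t) + 1 := by ring
  have hv1 : (1 : ZMod n).val = 1 := by
    rw [ZMod.val_one_eq_one_mod]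
    exact Nat.mod_eq_of_lt (by omega)
  have hadd := ZMod.val_add (p - t) 1
  rw [hv1] at hadd
  have hlt := ZMod.val_lt (n := n) (p - t)
  have hne1 : (p - t).val ≠ n - 1 := by
    intro hv
    apply h1
    have : p - t = ((n - 1 : ℕ) : ZMod n) := by
      rw [veq, ZMod.val_cast_of_lt (by omega)]
      exact hv
    have hcast : ((n - 1 : ℕ) : ZMod n) = -1 := by
      rw [Nat.cast_sub (by omega : 1 ≤ n), ZMod.natCast_self, Nat.cast_one]
      ring
    rw [hcast] at this
    have : t = p + 1 := by
      have := sub_eq_iff_eq_add.1 this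
      rw [this]; ring
    exact this
  have hmod : ((p - t).val + 1) % n = (p - t).val + 1 := Nat.mod_eq_of_lt (by omega)
  rw [hmod] at hadd
  rw [e1, hadd]
  have hnek : (p - t).val ≠ k - 1 := by
    intro hv
    apply h2
    have hc1 : p - t = (k : ZMod n) - 1 := by
      have hc2 : ((k - 1 : ℕ) : ZMod n) = (k : ZMod n) - 1 := by
        rw [Nat.cast_sub hk, Nat.cast_one]
      rw [← hc2, veq, ZMod.val_cast_of_lt (by omega)]
      exact hv
    have h3 : t = p - ((k : ZMod n) - 1) := by
      have h4 := sub_eq_iff_eq_add.1 hc1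
      rw [h4]; ring
    rw [h3]; ring
  omega

lemma arc_swap_eq (hk : 1 ≤ k) (hn : 2*k < n) {σ : ZMod n ≃ Fin n} {p t : ZMod n}
    (h1 : t ≠ p + 1) (h2 : t ≠ p + 1 - (k : ZMod n)) :
    arc k ((Equiv.swap p (p+1)).trans σ) t = arc k σ t := by
  have hkn : k ≤ n := by omega
  rw [arc, arc]
  have e1 : (win k t).image (⇑((Equiv.swap p (p+1)).trans σ))
      = ((win k t).image (Equiv.swap p (p+1))).image σ := by
    rw [Finset.image_image]
    rfl
  rw [e1, image_swap_win hkn (win_swap_agree hk hn h1 h2)]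

lemma T_swap (hk : 2 ≤ k) (hn : 2*k < n)
    {F : Finset (Finset (Fin n))}
    (hint : ∀ S ∈ F, ∀ T ∈ F, (S ∩ T).Nonempty)
    (hall : ∀ τ : ZMod n ≃ Fin n, (Tset k F τ).card = k)
    {σ : ZMod n ≃ Fin n} {b : ZMod n} (hTσ : Tset k F σ = win k b)
    {p : ZMod n} (hp1 : p + 1 ≠ b + ((k-1 : ℕ) : ZMod n))
    (hp2 : p + 1 ≠ b + ((k : ℕ) : ZMod n)) :
    Tset k F ((Equiv.swap p (p+1)).trans σ) = win k b := by
  have hk1 : 1 ≤ k := by omega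
  have hkn : k ≤ n := by omega
  obtain ⟨b', hTτ⟩ := T_block hk1 hn hint (hall ((Equiv.swap p (p+1)).trans σ))
  rw [hTτ]
  suffices hbb : b' = b by rw [hbb]
  have H : ∀ t : ZMod n, t ≠ p + 1 → t ≠ p + 1 - (k : ZMod n) →
      ((t - b).val < k ↔ (t - b').val < k) := by
    intro t h1 h2
    rw [← mem_win hkn (t := b), ← mem_win hkn (t := b'), ← hTσ, ← hTτ]
    rw [Tset, Tset, Finset.mem_filter, Finset.mem_filter,
      arc_swap_eq hk1 hn h1 h2]
  have diff : ∀ t : ZMod n, ¬(((t - b).val < k) ↔ ((t - b').val < k)) →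
      t = p + 1 ∨ t = p + 1 - (k : ZMod n) := by
    intro t hdiff
    by_contra hc
    push_neg at hc
    exact hdiff (H t hc.1 hc.2)
  by_contra hne
  set d := b' - b with hd
  have hdne : d ≠ 0 := fun h => hne (by rw [← sub_eq_zero]; exact h)
  set e := d.val with he
  have he0 : e ≠ 0 := fun h => hdne (by rw [veq, ZMod.val_zero, ← he]; exact h)
  have hen : e < n := ZMod.val_lt d
  have hnegd : (-d).val = n - e := by
    have := val_add_neg hdne
    omega
  have hcd : ((e : ℕ) : ZMod n) = d := ZMod.natCast_rightInverse d
  have hbz : b' = b + ((e : ℕ) : ZMod n) := by rw [hcd, hd]; ring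
  have base_b : ∀ a : ℕ, a < n → (b + (a : ZMod n) - b).val = a := by
    intro a ha
    have h1 : b + (a : ZMod n) - b = ((a : ℕ) : ZMod n) := by ring
    rw [h1, ZMod.val_cast_of_lt ha]
  have base_bp : ∀ a : ℕ, a < n → (b' + (a : ZMod n) - b').val = a := by
    intro a ha
    have h1 : b' + (a : ZMod n) - b' = ((a : ℕ) : ZMod n) := by ring
    rw [h1, ZMod.val_cast_of_lt ha]
  have cross_b : ∀ a : ℕ, a < n → ((b + (a : ZMod n) - b').val = (n - e) + a ∨
      (b + (a : ZMod n) - b').val + n = (n - e) + a) := by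
    intro a ha
    have h1 : b + (a : ZMod n) - b' = (-d) + (a : ZMod n) := by rw [hd]; ring
    rw [h1]
    have := val_add_nat (-d) a ha
    omega
  have cross_bp : ∀ a : ℕ, a < n → ((b' + (a : ZMod n) - b).val = e + a ∨
      (b' + (a : ZMod n) - b).val + n = e + a) := by
    intro a ha
    have h1 : b' + (a : ZMod n) - b = d + (a : ZMod n) := by rw [hd]; ring
    rw [h1]
    have := val_add_nat d a ha
    omega
  have cinj : ∀ a1 a2 : ℕ, a1 < n → a2 < n →
      (b + (a1 : ZMod n) = b + (a2 : ZMod n)) → a1 = a2 := by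
    intro a1 a2 h1 h2 h
    have h3 := add_left_cancel h
    rw [veq, ZMod.val_cast_of_lt h1, ZMod.val_cast_of_lt h2] at h3
    exact h3
  have cinj' : ∀ a1 a2 : ℕ, a1 < n → a2 < n →
      (b' + (a1 : ZMod n) = b' + (a2 : ZMod n)) → a1 = a2 := by
    intro a1 a2 h1 h2 h
    have h3 := add_left_cancel h
    rw [veq, ZMod.val_cast_of_lt h1, ZMod.val_cast_of_lt h2] at h3
    exact h3
  have hq : (p + 1) - (p + 1 - (k : ZMod n)) = ((k : ℕ) : ZMod n) := by push_cast; ring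
  -- helper: two base-b points being q1,q2 in the "wrong order" gives 2k ≡ 0
  have twok : ∀ x z : ZMod n, x - z = -((k:ℕ) : ZMod n) → x = p + 1 →
      z = p + 1 - (k : ZMod n) → False := by
    intro x z hxz h1 h2
    rw [h1, h2, hq] at hxz
    have h2k : ((2*k : ℕ) : ZMod n) = 0 := by
      push_cast
      push_cast at hxz
      linear_combination hxz
    rw [veq, ZMod.val_cast_of_lt (by omega : 2*k < n), ZMod.val_zero] at h2k
    omega
  rcases Nat.lt_or_ge e k with hek | hek
  · -- e < k
    rcases eq_or_ne e 1 with he1 | he1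
    · -- e = 1 : points b and b + k
      have hx : b + ((0:ℕ) : ZMod n) = p + 1 ∨ b + ((0:ℕ) : ZMod n) = p + 1 - (k : ZMod n) := by
        apply diff
        have v1 := base_b 0 (by omega)
        have v2 := cross_b 0 (by omega)
        have v3 := ZMod.val_lt (n := n) (b + ((0:ℕ) : ZMod n) - b')
        omega
      have hz : b + ((k:ℕ) : ZMod n) = p + 1 ∨ b + ((k:ℕ) : ZMod n) = p + 1 - (k : ZMod n) := by
        apply diff
        have v1 := base_b k (by omega)
        have v2 := cross_b k (by omega)
        have v3 := ZMod.val_lt (n := n) (b + ((k:ℕ) : ZMod n) - b')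
        omega
      rcases hx with h1 | h1 <;> rcases hz with h2 | h2
      · exact absurd (cinj 0 k (by omega) (by omega) (h1.trans h2.symm)) (by omega)
      · refine twok (b + ((0:ℕ) : ZMod n)) (b + ((k:ℕ) : ZMod n)) ?_ h1 h2
        push_cast
        ring
      · exact hp2 h2.symm
      · exact absurd (cinj 0 k (by omega) (by omega) (h1.trans h2.symm)) (by omega)
    · -- 2 ≤ e < k : points b, b+1, b+k
      have hx : b + ((0:ℕ) : ZMod n) = p + 1 ∨ b + ((0:ℕ) : ZMod n) = p + 1 - (k : ZMod n) := by
        apply diff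
        have v1 := base_b 0 (by omega)
        have v2 := cross_b 0 (by omega)
        have v3 := ZMod.val_lt (n := n) (b + ((0:ℕ) : ZMod n) - b')
        omega
      have hy : b + ((1:ℕ) : ZMod n) = p + 1 ∨ b + ((1:ℕ) : ZMod n) = p + 1 - (k : ZMod n) := by
        apply diff
        have v1 := base_b 1 (by omega)
        have v2 := cross_b 1 (by omega)
        have v3 := ZMod.val_lt (n := n) (b + ((1:ℕ) : ZMod n) - b')
        omega
      have hz : b + ((k:ℕ) : ZMod n) = p + 1 ∨ b + ((k:ℕ) : ZMod n) = p + 1 - (k : ZMod n) := by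
        apply diff
        have v1 := base_b k (by omega)
        have v2 := cross_b k (by omega)
        have v3 := ZMod.val_lt (n := n) (b + ((k:ℕ) : ZMod n) - b')
        omega
      exact three_pigeon hx hy hz
        (fun h => absurd (cinj 0 1 (by omega) (by omega) h) (by omega))
        (fun h => absurd (cinj 0 k (by omega) (by omega) h) (by omega))
        (fun h => absurd (cinj 1 k (by omega) (by omega) h) (by omega))
  · rcases le_or_gt e (n - k) with hB | hC
    · -- k ≤ e ≤ n - k : points b, b+1, b'
      have hx : b + ((0:ℕ) : ZMod n) = p + 1 ∨ b + ((0:ℕ) : ZMod n) = p + 1 - (k : ZMod n) := by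
        apply diff
        have v1 := base_b 0 (by omega)
        have v2 := cross_b 0 (by omega)
        have v3 := ZMod.val_lt (n := n) (b + ((0:ℕ) : ZMod n) - b')
        omega
      have hy : b + ((1:ℕ) : ZMod n) = p + 1 ∨ b + ((1:ℕ) : ZMod n) = p + 1 - (k : ZMod n) := by
        apply diff
        have v1 := base_b 1 (by omega)
        have v2 := cross_b 1 (by omega)
        have v3 := ZMod.val_lt (n := n) (b + ((1:ℕ) : ZMod n) - b')
        omega
      have hz : b' = p + 1 ∨ b' = p + 1 - (k : ZMod n) := by
        apply diff
        have v1 : (b' - b).val = e := by rw [← hd, ← he]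
        have v2 : (b' - b').val = 0 := by rw [sub_self, ZMod.val_zero]
        omega
      refine three_pigeon hx hy hz
        (fun h => absurd (cinj 0 1 (by omega) (by omega) h) (by omega))
        (fun h => ?_) (fun h => ?_)
      · rw [hbz] at h
        exact absurd (cinj 0 e (by omega) (by omega) h) (by omega)
      · rw [hbz] at h
        exact absurd (cinj 1 e (by omega) (by omega) h) (by omega)
    · -- e > n - k
      rcases eq_or_ne e (n-1) with he1 | he1
      · -- e = n-1 : points b' and b' + k
        have hx : b' + ((0:ℕ) : ZMod n) = p + 1 ∨ b' + ((0:ℕ) : ZMod n) = p + 1 - (k : ZMod n) := by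
          apply diff
          have v1 := base_bp 0 (by omega)
          have v2 := cross_bp 0 (by omega)
          have v3 := ZMod.val_lt (n := n) (b' + ((0:ℕ) : ZMod n) - b)
          omega
        have hz : b' + ((k:ℕ) : ZMod n) = p + 1 ∨ b' + ((k:ℕ) : ZMod n) = p + 1 - (k : ZMod n) := by
          apply diff
          have v1 := base_bp k (by omega)
          have v2 := cross_bp k (by omega)
          have v3 := ZMod.val_lt (n := n) (b' + ((k:ℕ) : ZMod n) - b)
          omega
        rcases hx with h1 | h1 <;> rcases hz with h2 | h2
        · exact absurd (cinj' 0 k (by omega) (by omega) (h1.trans h2.symm)) (by omega)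
        · refine twok (b' + ((0:ℕ) : ZMod n)) (b' + ((k:ℕ) : ZMod n)) ?_ h1 h2
          push_cast
          ring
        · -- b' + k = p + 1, but b' + k = b + (k-1)
          apply hp1
          rw [← h2, hbz, he1]
          have hcast : ((n - 1 : ℕ) : ZMod n) + ((k:ℕ) : ZMod n) = ((k - 1 : ℕ) : ZMod n) := by
            rw [Nat.cast_sub (by omega : 1 ≤ n), Nat.cast_sub (by omega : 1 ≤ k),
              ZMod.natCast_self]
            push_cast
            ring
          rw [add_assoc, hcast]
        · exact absurd (cinj' 0 k (by omega) (by omega) (h1.trans h2.symm)) (by omega)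
      · -- n - k < e ≤ n - 2 : points b', b'+1, b'+k
        have hx : b' + ((0:ℕ) : ZMod n) = p + 1 ∨ b' + ((0:ℕ) : ZMod n) = p + 1 - (k : ZMod n) := by
          apply diff
          have v1 := base_bp 0 (by omega)
          have v2 := cross_bp 0 (by omega)
          have v3 := ZMod.val_lt (n := n) (b' + ((0:ℕ) : ZMod n) - b)
          omega
        have hy : b' + ((1:ℕ) : ZMod n) = p + 1 ∨ b' + ((1:ℕ) : ZMod n) = p + 1 - (k : ZMod n) := by
          apply diff
          have v1 := base_bp 1 (by omega)
          have v2 := cross_bp 1 (by omega)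
          have v3 := ZMod.val_lt (n := n) (b' + ((1:ℕ) : ZMod n) - b)
          omega
        have hz : b' + ((k:ℕ) : ZMod n) = p + 1 ∨ b' + ((k:ℕ) : ZMod n) = p + 1 - (k : ZMod n) := by
          apply diff
          have v1 := base_bp k (by omega)
          have v2 := cross_bp k (by omega)
          have v3 := ZMod.val_lt (n := n) (b' + ((k:ℕ) : ZMod n) - b)
          omega
        exact three_pigeon hx hy hz
          (fun h => absurd (cinj' 0 1 (by omega) (by omega) h) (by omega))
          (fun h => absurd (cinj' 0 k (by omega) (by omega) h) (by omega))
          (fun h => absurd (cinj' 1 k (by omega) (by omega) h) (by omega))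

end Swap

section Move

variable {n k : ℕ} [NeZero n]

lemma trans_swap_apply_ne {β : Type*} (τ : ZMod n ≃ β) {p w : ZMod n}
    (h1 : w ≠ p) (h2 : w ≠ p + 1) : ((Equiv.swap p (p+1)).trans τ) w = τ w := by
  rw [Equiv.trans_apply, Equiv.swap_apply_of_ne_of_ne h1 h2]

lemma add_cast_ne [NeZero n] (t : ZMod n) {a1 a2 : ℕ} (h1 : a1 < n) (h2 : a2 < n)
    (hne : a1 ≠ a2) : t + (a1 : ZMod n) ≠ t + (a2 : ZMod n) := by
  intro h
  apply hne
  have h3 := add_left_cancel h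
  rw [veq, ZMod.val_cast_of_lt h1, ZMod.val_cast_of_lt h2] at h3
  exact h3

lemma arc_swap_inwin (hkn : k ≤ n) {σ : ZMod n ≃ Fin n} {p t : ZMod n}
    (hp : p ∈ win k t) (hp1 : p + 1 ∈ win k t) :
    arc k ((Equiv.swap p (p+1)).trans σ) t = arc k σ t := by
  rw [arc, arc]
  have e1 : (win k t).image (⇑((Equiv.swap p (p+1)).trans σ))
      = ((win k t).image (Equiv.swap p (p+1))).image σ := by
    rw [Finset.image_image]; rfl
  rw [e1, image_swap_win hkn (iff_of_true hp hp1)]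

variable {F : Finset (Finset (Fin n))}

/-- move the element at window position `i` to the top of the window -/
lemma move_up (hk : 2 ≤ k) (hn : 2*k < n)
    (hint : ∀ S ∈ F, ∀ T ∈ F, (S ∩ T).Nonempty)
    (hall : ∀ τ : ZMod n ≃ Fin n, (Tset k F τ).card = k)
    {b c : ZMod n} (hc : c = b + ((k-1 : ℕ) : ZMod n)) :
    ∀ (j i : ℕ), 1 ≤ i → i + j = k - 1 →
    ∀ (τ : ZMod n ≃ Fin n), Tset k F τ = win k b →
    ∃ τ' : ZMod n ≃ Fin n, Tset k F τ' = win k b ∧ arc k τ' c = arc k τ c ∧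
      τ' (c + ((k-1 : ℕ) : ZMod n)) = τ (c + (i : ZMod n)) ∧ τ' c = τ c := by
  have hkn : k ≤ n := by omega
  intro j
  induction j with
  | zero =>
    intro i hi1 hik τ hT
    have : i = k - 1 := by omega
    subst this
    exact ⟨τ, hT, rfl, rfl, rfl⟩
  | succ j ih =>
    intro i hi1 hik τ hT
    set p := c + (i : ZMod n) with hp
    have hq1 : p + 1 = c + ((i+1 : ℕ) : ZMod n) := by
      rw [hp]; push_cast; ring
    have hcast1 : ((k-1:ℕ) : ZMod n) + 1 = ((k:ℕ) : ZMod n) := by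
      rw [Nat.cast_sub (by omega : 1 ≤ k), Nat.cast_one]; ring
    have hck : b + ((k:ℕ) : ZMod n) = c + 1 := by
      rw [hc, add_assoc, hcast1]
    have hswap1 : p + 1 ≠ b + ((k-1:ℕ) : ZMod n) := by
      rw [hq1, ← hc]
      intro h
      have : c + ((i+1 : ℕ) : ZMod n) = c + ((0:ℕ) : ZMod n) := by simpa using h
      exact absurd (add_left_cancel this) (by
        intro hcc
        rw [veq, ZMod.val_cast_of_lt (by omega : i+1 < n),
          ZMod.val_cast_of_lt (by omega : 0 < n)] at hcc
        omega)
    have hswap2 : p + 1 ≠ b + ((k:ℕ) : ZMod n) := by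
      rw [hq1, hck]
      intro h
      have : c + ((i+1 : ℕ) : ZMod n) = c + ((1:ℕ) : ZMod n) := by simpa using h
      exact absurd (add_left_cancel this) (by
        intro hcc
        rw [veq, ZMod.val_cast_of_lt (by omega : i+1 < n),
          ZMod.val_cast_of_lt (by omega : 1 < n)] at hcc
        omega)
    set τ1 := (Equiv.swap p (p+1)).trans τ with hτ1
    have hT1 : Tset k F τ1 = win k b := T_swap hk hn hint hall hT hswap1 hswap2
    have hpin : p ∈ win k c := by
      rw [mem_win hkn, hp]
      have : c + (i : ZMod n) - c = ((i:ℕ) : ZMod n) := by ring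
      rw [this, ZMod.val_cast_of_lt (by omega : i < n)]
      omega
    have hpin1 : p + 1 ∈ win k c := by
      rw [hq1, mem_win hkn]
      have : c + ((i+1:ℕ) : ZMod n) - c = ((i+1:ℕ) : ZMod n) := by ring
      rw [this, ZMod.val_cast_of_lt (by omega : i+1 < n)]
      omega
    have harc1 : arc k τ1 c = arc k τ c := arc_swap_inwin hkn hpin hpin1
    have hc1 : τ1 c = τ c := by
      rw [hτ1]
      apply trans_swap_apply_ne
      · rw [hp]
        intro h
        nth_rewrite 1 [show c = c + ((0:ℕ) : ZMod n) by simp] at h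
        exact add_cast_ne c (by omega) (by omega) (by omega : (0:ℕ) ≠ i) h
      · rw [hq1]
        intro h
        nth_rewrite 1 [show c = c + ((0:ℕ) : ZMod n) by simp] at h
        exact add_cast_ne c (by omega) (by omega) (by omega : (0:ℕ) ≠ i+1) h
    have htrack : τ1 (c + ((i+1 : ℕ) : ZMod n)) = τ (c + (i : ZMod n)) := by
      rw [hτ1, ← hq1, Equiv.trans_apply, Equiv.swap_apply_right, hp]
    obtain ⟨τ', h1, h2, h3, h4⟩ := ih (i+1) (by omega) (by omega) τ1 hT1
    exact ⟨τ', h1, by rw [h2, harc1], by rw [h3, htrack], by rw [h4, hc1]⟩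

/-- march the element at outside position `q` down to position `c + k` -/
lemma march_down (hk : 2 ≤ k) (hn : 2*k < n)
    (hint : ∀ S ∈ F, ∀ T ∈ F, (S ∩ T).Nonempty)
    (hall : ∀ τ : ZMod n ≃ Fin n, (Tset k F τ).card = k)
    {b c : ZMod n} (hc : c = b + ((k-1 : ℕ) : ZMod n)) :
    ∀ (j : ℕ), k + j < n →
    ∀ (τ : ZMod n ≃ Fin n), Tset k F τ = win k b →
    ∀ (q : ZMod n), (q - c).val = k + j →
    ∃ τ' : ZMod n ≃ Fin n, Tset k F τ' = win k b ∧ (∀ w ∈ win k c, τ' w = τ w) ∧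
      τ' (c + ((k:ℕ) : ZMod n)) = τ q := by
  have hkn : k ≤ n := by omega
  intro j
  induction j with
  | zero =>
    intro hjn τ hT q hq
    have hqe : q = c + ((k:ℕ) : ZMod n) := by
      have h1 : q - c = ((k:ℕ) : ZMod n) := by
        rw [veq, ZMod.val_cast_of_lt (by omega : k < n)]
        simpa using hq
      have := sub_eq_iff_eq_add.1 h1
      rw [this]; ring
    exact ⟨τ, hT, fun w _ => rfl, by rw [← hqe]⟩
  | succ j ih =>
    intro hjn τ hT q hq
    have hqe : q - c = ((k+j+1 : ℕ) : ZMod n) := by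
      rw [veq, ZMod.val_cast_of_lt (by omega : k+j+1 < n)]
      omega
    have hqc : q = c + ((k+j+1 : ℕ) : ZMod n) := by
      have := sub_eq_iff_eq_add.1 hqe
      rw [this]; ring
    set p := q - 1 with hp
    have hp1 : p + 1 = q := by rw [hp]; ring
    have hcast1 : ((k-1:ℕ) : ZMod n) + 1 = ((k:ℕ) : ZMod n) := by
      rw [Nat.cast_sub (by omega : 1 ≤ k), Nat.cast_one]; ring
    have hck : b + ((k:ℕ) : ZMod n) = c + 1 := by
      rw [hc, add_assoc, hcast1]
    have hswap1 : p + 1 ≠ b + ((k-1:ℕ) : ZMod n) := by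
      rw [hp1, ← hc, hqc]
      nth_rewrite 2 [show c = c + ((0:ℕ) : ZMod n) by simp]
      exact add_cast_ne c (by omega) (by omega) (by omega)
    have hswap2 : p + 1 ≠ b + ((k:ℕ) : ZMod n) := by
      rw [hp1, hck, hqc, show (c + 1 : ZMod n) = c + ((1:ℕ) : ZMod n) by simp]
      exact add_cast_ne c (by omega) (by omega) (by omega)
    set τ1 := (Equiv.swap p (p+1)).trans τ with hτ1
    have hT1 : Tset k F τ1 = win k b := T_swap hk hn hint hall hT hswap1 hswap2
    have hpe : p - c = ((k+j : ℕ) : ZMod n) := by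
      rw [hp]
      have : q - 1 - c = (q - c) - 1 := by ring
      rw [this, hqe]
      push_cast
      ring
    have hwin : ∀ w ∈ win k c, τ1 w = τ w := by
      intro w hw
      rw [mem_win hkn] at hw
      rw [hτ1]
      apply trans_swap_apply_ne
      · intro h
        rw [h] at hw
        rw [hpe, ZMod.val_cast_of_lt (by omega : k+j < n)] at hw
        omega
      · rw [hp1]
        intro h
        rw [h] at hw
        rw [hqe, ZMod.val_cast_of_lt (by omega : k+j+1 < n)] at hw
        omega
    have htrack : τ1 p = τ q := by
      rw [hτ1, Equiv.trans_apply, Equiv.swap_apply_left, hp1]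
    have hpval : (p - c).val = k + j := by
      rw [hpe, ZMod.val_cast_of_lt (by omega : k+j < n)]
    obtain ⟨τ', h1, h2, h3⟩ := ih (by omega) τ1 hT1 p hpval
    refine ⟨τ', h1, fun w hw => (h2 w hw).trans (hwin w hw), h3.trans htrack⟩

/-- the entry swap : exchange top-of-window with the element just outside -/
lemma entry_swap (hk : 2 ≤ k) (hn : 2*k < n)
    (hint : ∀ S ∈ F, ∀ T ∈ F, (S ∩ T).Nonempty)
    (hall : ∀ τ : ZMod n ≃ Fin n, (Tset k F τ).card = k)
    {b c : ZMod n} (hc : c = b + ((k-1 : ℕ) : ZMod n))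
    (τ : ZMod n ≃ Fin n) (hT : Tset k F τ = win k b) :
    ∃ τ' : ZMod n ≃ Fin n, Tset k F τ' = win k b ∧ τ' c = τ c ∧
      arc k τ' c = insert (τ (c + ((k:ℕ) : ZMod n)))
        ((arc k τ c).erase (τ (c + ((k-1:ℕ) : ZMod n)))) := by
  have hkn : k ≤ n := by omega
  set p := c + ((k-1:ℕ) : ZMod n) with hp
  have hcast1 : ((k-1:ℕ) : ZMod n) + 1 = ((k:ℕ) : ZMod n) := by
    rw [Nat.cast_sub (by omega : 1 ≤ k), Nat.cast_one]; ring
  have hp1 : p + 1 = c + ((k:ℕ) : ZMod n) := by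
    rw [hp, add_assoc, hcast1]
  have hck : b + ((k:ℕ) : ZMod n) = c + 1 := by
    rw [hc, add_assoc, hcast1]
  have hswap1 : p + 1 ≠ b + ((k-1:ℕ) : ZMod n) := by
    rw [hp1, ← hc]
    nth_rewrite 2 [show c = c + ((0:ℕ) : ZMod n) by simp]
    exact add_cast_ne c (by omega) (by omega) (by omega)
  have hswap2 : p + 1 ≠ b + ((k:ℕ) : ZMod n) := by
    rw [hp1, hck, show (c + 1 : ZMod n) = c + ((1:ℕ) : ZMod n) by simp]
    exact add_cast_ne c (by omega) (by omega) (by omega)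
  set τ1 := (Equiv.swap p (p+1)).trans τ with hτ1
  refine ⟨τ1, T_swap hk hn hint hall hT hswap1 hswap2, ?_, ?_⟩
  · rw [hτ1]
    apply trans_swap_apply_ne
    · rw [hp]
      nth_rewrite 1 [show c = c + ((0:ℕ) : ZMod n) by simp]
      exact add_cast_ne c (by omega) (by omega) (by omega)
    · rw [hp1]
      nth_rewrite 1 [show c = c + ((0:ℕ) : ZMod n) by simp]
      exact add_cast_ne c (by omega) (by omega) (by omega)
  · -- arc computation
    have hpin : p ∈ win k c := by
      rw [mem_win hkn, hp]
      have e : c + ((k-1:ℕ) : ZMod n) - c = ((k-1:ℕ) : ZMod n) := by ring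
      rw [e, ZMod.val_cast_of_lt (by omega : k-1 < n)]
      omega
    have hpout : p + 1 ∉ win k c := by
      rw [hp1, mem_win hkn]
      have e : c + ((k:ℕ) : ZMod n) - c = ((k:ℕ) : ZMod n) := by ring
      rw [e, ZMod.val_cast_of_lt (by omega : k < n)]
      omega
    have himg : (win k c).image (Equiv.swap p (p+1)) = insert (p+1) ((win k c).erase p) := by
      apply Finset.Subset.antisymm
      · intro s hs
        obtain ⟨w, hw, rfl⟩ := Finset.mem_image.1 hs
        rcases eq_or_ne w p with rfl | h1
        · rw [Equiv.swap_apply_left]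
          exact Finset.mem_insert_self _ _
        rcases eq_or_ne w (p+1) with rfl | h2
        · exact absurd hw hpout
        · rw [Equiv.swap_apply_of_ne_of_ne h1 h2]
          exact Finset.mem_insert_of_mem (Finset.mem_erase.2 ⟨h1, hw⟩)
      · intro s hs
        rcases Finset.mem_insert.1 hs with rfl | hs'
        · exact Finset.mem_image.2 ⟨p, hpin, Equiv.swap_apply_left _ _⟩
        · obtain ⟨hs1, hs2⟩ := Finset.mem_erase.1 hs'
          refine Finset.mem_image.2 ⟨s, hs2, ?_⟩
          exact Equiv.swap_apply_of_ne_of_ne hs1 (fun h => hpout (h ▸ hs2))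
    have e1 : arc k τ1 c = ((win k c).image (Equiv.swap p (p+1))).image τ := by
      rw [arc, hτ1, Finset.image_image]; rfl
    rw [e1, himg, Finset.image_insert, hp1]
    congr 1
    rw [Finset.image_erase τ.injective]
    rfl

end Move

section Gen

variable {n k : ℕ} [NeZero n] {F : Finset (Finset (Fin n))}

lemma gen (hk : 2 ≤ k) (hn : 2*k < n)
    (hint : ∀ S ∈ F, ∀ T ∈ F, (S ∩ T).Nonempty)
    (hall : ∀ τ : ZMod n ≃ Fin n, (Tset k F τ).card = k)
    {b c : ZMod n} (hc : c = b + ((k-1 : ℕ) : ZMod n)) :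
    ∀ (dd : ℕ) (τ : ZMod n ≃ Fin n), Tset k F τ = win k b →
    ∀ S : Finset (Fin n), S.card = k → τ c ∈ S → (S \ arc k τ c).card = dd → S ∈ F := by
  have hkn : k ≤ n := by omega
  have hcwin : c ∈ win k b := by
    rw [mem_win hkn, hc]
    have e : b + ((k-1:ℕ) : ZMod n) - b = ((k-1:ℕ):ZMod n) := by ring
    rw [e, ZMod.val_cast_of_lt (by omega : k - 1 < n)]
    omega
  have hcc : c ∈ win k c := by
    rw [mem_win hkn, sub_self, ZMod.val_zero]
    omega
  have htop : c + ((k-1:ℕ):ZMod n) ∈ win k c := by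
    rw [mem_win hkn]
    have e : c + ((k-1:ℕ):ZMod n) - c = ((k-1:ℕ):ZMod n) := by ring
    rw [e, ZMod.val_cast_of_lt (by omega : k - 1 < n)]
    omega
  intro dd
  induction dd with
  | zero =>
    intro τ hT S hS hxS hd
    have hsub : S ⊆ arc k τ c :=
      Finset.sdiff_eq_empty_iff_subset.1 (Finset.card_eq_zero.1 hd)
    have hSe : S = arc k τ c :=
      Finset.eq_of_subset_of_card_le hsub (by rw [card_arc hkn, hS])
    rw [hSe]
    have hcT : c ∈ Tset k F τ := by rw [hT]; exact hcwin
    rw [Tset, Finset.mem_filter] at hcT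
    exact hcT.2
  | succ dd ih =>
    intro τ hT S hS hxS hd
    set A := arc k τ c with hA
    have hcardA : A.card = k := card_arc hkn τ c
    have hyne : (S \ A).Nonempty := by
      rw [← Finset.card_pos, hd]; omega
    obtain ⟨y, hy⟩ := hyne
    have hzne : (A \ S).Nonempty := by
      rw [← Finset.card_pos, Finset.card_sdiff_comm (hcardA.trans hS.symm), hd]
      omega
    obtain ⟨z, hz⟩ := hzne
    rw [Finset.mem_sdiff] at hy hz
    obtain ⟨w, hw, hzw⟩ := Finset.mem_image.1 (show z ∈ (win k c).image τ from hz.1)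
    have hwc : w ≠ c := by
      intro h
      apply hz.2
      rw [← hzw, h]
      exact hxS
    set i := (w - c).val with hi
    have hiw : w = c + (i : ZMod n) := by
      have h1 : ((i : ℕ) : ZMod n) = w - c := ZMod.natCast_rightInverse (w - c)
      rw [h1]; ring
    have hik : i < k := by rw [mem_win hkn] at hw; exact hw
    have hi1 : 1 ≤ i := by
      rcases Nat.eq_zero_or_pos i with h0 | h
      · exfalso
        apply hwc
        rw [hiw, h0]
        simp
      · exact h
    obtain ⟨τa, ha1, ha2, ha3, ha4⟩ :=
      move_up hk hn hint hall hc (k-1-i) i hi1 (by omega) τ hT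
    have hza : τa (c + ((k-1:ℕ) : ZMod n)) = z := by rw [ha3, ← hiw, hzw]
    set q := τa.symm y with hq
    have hyq : τa q = y := τa.apply_symm_apply y
    have hqout : ¬ q ∈ win k c := by
      intro hqin
      apply hy.2
      rw [hA, ← ha2]
      exact Finset.mem_image.2 ⟨q, hqin, hyq⟩
    have hqval : k ≤ (q - c).val := by
      rw [mem_win hkn] at hqout; omega
    have hjn : k + ((q - c).val - k) < n := by
      have := ZMod.val_lt (n := n) (q - c); omega
    obtain ⟨τb, hb1, hb2, hb3⟩ :=
      march_down hk hn hint hall hc ((q - c).val - k) hjn τa ha1 q (by omega)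
    have harcb : arc k τb c = A := by
      have e : (win k c).image (⇑τb) = (win k c).image (⇑τa) :=
        Finset.image_congr (fun w hw => hb2 w hw)
      rw [arc, e, ← arc, ha2]
    have hbc : τb c = τ c := by rw [hb2 c hcc, ha4]
    have hbz : τb (c + ((k-1:ℕ):ZMod n)) = z := by rw [hb2 _ htop, hza]
    have hby : τb (c + ((k:ℕ):ZMod n)) = y := by rw [hb3, hyq]
    obtain ⟨τ2, h21, h22, h23⟩ := entry_swap hk hn hint hall hc τb hb1
    rw [hby, harcb, hbz] at h23
    apply ih τ2 h21 S hS (by rw [h22, hbc]; exact hxS)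
    rw [h23, Finset.sdiff_insert]
    have e2 : S \ A.erase z = S \ A := by
      ext a
      simp only [Finset.mem_sdiff, Finset.mem_erase]
      constructor
      · rintro ⟨h1, h2⟩
        exact ⟨h1, fun h3 => h2 ⟨fun he => hz.2 (he ▸ h1), h3⟩⟩
      · rintro ⟨h1, h2⟩
        exact ⟨h1, fun h3 => h2 h3.2⟩
    rw [e2, Finset.card_erase_of_mem (Finset.mem_sdiff.2 hy), hd]
    omega

end Gen

lemma star_card {n k : ℕ} (hk : 1 ≤ k) (hkn : k ≤ n) (x : Fin n) :
    (Finset.univ.filter (fun S : Finset (Fin n) => S.card = k ∧ x ∈ S)).card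
      = (n-1).choose (k-1) := by
  classical
  have h1 : (Finset.univ.erase x).card = n - 1 := by
    rw [Finset.card_erase_of_mem (Finset.mem_univ x), Finset.card_univ, Fintype.card_fin]
  rw [← h1, ← Finset.card_powersetCard]
  refine Finset.card_bij' (fun S _ => S.erase x) (fun T _ => insert x T) ?_ ?_ ?_ ?_
  · intro S hS
    rw [Finset.mem_filter] at hS
    rw [Finset.mem_powersetCard]
    exact ⟨Finset.erase_subset_erase x (Finset.subset_univ S),
      by rw [Finset.card_erase_of_mem hS.2.2, hS.2.1]⟩
  · intro T hT
    rw [Finset.mem_powersetCard] at hT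
    have hxT : x ∉ T := fun h => (Finset.mem_erase.1 (hT.1 h)).1 rfl
    rw [Finset.mem_filter]
    exact ⟨Finset.mem_univ _,
      by rw [Finset.card_insert_of_notMem hxT, hT.2]; omega,
      Finset.mem_insert_self _ _⟩
  · intro S hS
    rw [Finset.mem_filter] at hS
    exact Finset.insert_erase hS.2.2
  · intro T hT
    rw [Finset.mem_powersetCard] at hT
    exact Finset.erase_insert (fun h => (Finset.mem_erase.1 (hT.1 h)).1 rfl)

end EKRUnique

open EKRUnique

theorem ekr_uniqueness (n k : ℕ) (hk : 0 < k) (hn : 2 * k < n)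
    (F : Finset (Finset (Fin n)))
    (hcard : ∀ S ∈ F, S.card = k)
    (hint : ∀ S ∈ F, ∀ T ∈ F, (S ∩ T).Nonempty)
    (hmax : F.card = (n - 1).choose (k - 1)) :
    ∃ i : Fin n, F = Finset.univ.filter (fun S : Finset (Fin n) => S.card = k ∧ i ∈ S) := by
  classical
  rcases eq_or_lt_of_le (show 1 ≤ k from hk) with hk1 | hk2
  · -- k = 1
    obtain rfl : k = 1 := hk1.symm
    have hF1 : F.card = 1 := by simpa using hmax
    obtain ⟨S, hFS⟩ := Finset.card_eq_one.1 hF1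
    have hScard : S.card = 1 := hcard S (by rw [hFS]; exact Finset.mem_singleton_self S)
    obtain ⟨i, hSi⟩ := Finset.card_eq_one.1 hScard
    refine ⟨i, ?_⟩
    rw [hFS, hSi]
    ext T
    simp only [Finset.mem_singleton, Finset.mem_filter, Finset.mem_univ, true_and]
    constructor
    · rintro rfl
      exact ⟨Finset.card_singleton i, Finset.mem_singleton_self i⟩
    · rintro ⟨hT1, hT2⟩
      obtain ⟨a, rfl⟩ := Finset.card_eq_one.1 hT1
      rw [Finset.mem_singleton] at hT2
      rw [hT2]
  · -- 2 ≤ k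
    have hk2' : 2 ≤ k := hk2
    haveI : NeZero n := ⟨by omega⟩
    have hall := T_card_eq (by omega) hn F hcard hint hmax
    obtain ⟨σ0⟩ : Nonempty (ZMod n ≃ Fin n) := ⟨Fintype.equivFinOfCardEq (ZMod.card n)⟩
    obtain ⟨b, hb⟩ := T_block (by omega) hn hint (hall σ0)
    refine ⟨σ0 (b + ((k-1:ℕ) : ZMod n)), ?_⟩
    have hsub : Finset.univ.filter
        (fun S : Finset (Fin n) => S.card = k ∧ σ0 (b + ((k-1:ℕ) : ZMod n)) ∈ S) ⊆ F := by
      intro S hS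
      rw [Finset.mem_filter] at hS
      exact gen hk2' hn hint hall rfl _ σ0 hb S hS.2.1 hS.2.2 rfl
    have hstar := star_card (n := n) (by omega : 1 ≤ k) (by omega : k ≤ n)
      (σ0 (b + ((k-1:ℕ) : ZMod n)))
    exact (Finset.eq_of_subset_of_card_le hsub (by rw [hmax, hstar])).symm
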